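/- Let F be a field of positive characteristic p, let A be a finite-dimensional unital (not necessarily associative) F-algebra, and let λ ∈ F. If R : A → A is a Rota–Baxter operator of weight λ, then there exist natural numbers k, l such that R^k ∘ (R + λ·id)^l = 0 as a linear operator on A; in particular, the spectrum of R is contained in {0, −λ}. -/

import Mathlib

open LinearMap Module TensorProduct

/-- Auxiliary: powers act by powers of the eigenvalue on an eigenvector. -/
private lemma rb_aux_eigen_pow {F V : Type*} [Field F] [AddCommGroup V] [Module F V]
    (g : Module.End F V) (v : V) (c : F) (h : g v = c • v) (m : ℕ) :
    (g ^ m) v = c ^ m • v := by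
  induction m with
  | zero => simp
  | succ n ih => rw [pow_succ', pow_succ', Module.End.mul_apply, ih, map_smul, h, smul_smul,
      mul_comm c]

/-- Auxiliary: over an algebraically closed field of characteristic `p`, if
`S = R^q (R + λ)^q` (with `q = p^e` at least the dimension) can be written as the
commutator `[M, R^q]`, then `S = 0`.  This is proved via the generalized eigenspace
decomposition: `R^q` acts as the scalar `μ^q` on each maximal generalized eigenspace. -/
private lemma rb_aux_closed (p : ℕ) [Fact p.Prime] {K V : Type*} [Field K] [CharP K p]
    [IsAlgClosed K] [AddCommGroup V] [Module K V] [FiniteDimensional K V] [Nontrivial V]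
    (lam' : K) (RR MM : Module.End K V) (e : ℕ)
    (he : Module.finrank K V < p ^ e)
    (h1 : MM * RR ^ p ^ e - RR ^ p ^ e * MM = RR ^ p ^ e * (RR + lam' • 1) ^ p ^ e) :
    RR ^ p ^ e * (RR + lam' • 1) ^ p ^ e = 0 := by
  classical
  set q := p ^ e with hq
  set S : Module.End K V := RR ^ q * (RR + lam' • 1) ^ q with hS
  have hntE : Nontrivial (Module.End K V) := by
    obtain ⟨a, ha⟩ := exists_ne (0 : V)
    exact ⟨1, 0, fun h => ha (by simpa using LinearMap.congr_fun h a)⟩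
  haveI : CharP (Module.End K V) p := charP_of_injective_algebraMap' K p
  have hfr : Module.finrank K V ≤ q := le_of_lt he
  set G : K → Submodule K V := RR.maxGenEigenspace with hG
  have hPa : ∀ (μ : K), ∀ a ∈ G μ, (RR ^ q) a = μ ^ q • a := by
    intro μ a ha
    rw [hG, Module.End.maxGenEigenspace_eq_genEigenspace_finrank,
      Module.End.mem_genEigenspace_nat] at ha
    have h0 : ((RR - μ • 1) ^ q) a = 0 := by
      have hqe : q = (q - Module.finrank K V) + Module.finrank K V :=
        (Nat.sub_add_cancel hfr).symm
      rw [hqe, pow_add, Module.End.mul_apply, ha, map_zero]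
    rw [sub_pow_char_pow_of_commute p e ((Commute.one_right RR).smul_right μ),
      smul_pow, one_pow, LinearMap.sub_apply, LinearMap.smul_apply, Module.End.one_apply] at h0
    exact sub_eq_zero.mp h0
  have hQpow : (RR + lam' • 1) ^ q = RR ^ q + lam' ^ q • 1 := by
    rw [add_pow_char_pow_of_commute p e ((Commute.one_right RR).smul_right lam'),
      smul_pow, one_pow]
  have hSa : ∀ (μ : K), ∀ a ∈ G μ, S a = (μ ^ q * (μ ^ q + lam' ^ q)) • a := by
    intro μ a ha
    rw [hS, hQpow, Module.End.mul_apply, LinearMap.add_apply, LinearMap.smul_apply, Module.End.one_apply, hPa μ a ha,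
      ← add_smul, map_smul, hPa μ a ha, smul_smul]
    rw [mul_comm]
  have hzero : ∀ (μ : K), ∀ a ∈ G μ, S a = 0 := by
    intro μ a ha
    set c : K := μ ^ q * (μ ^ q + lam' ^ q) with hc
    set D : Module.End K V := μ ^ q • 1 - RR ^ q with hD
    have hcd : Commute RR D :=
      (((Commute.one_right RR).smul_right (μ ^ q)).sub_right
        ((Commute.refl RR).pow_right q))
    have hDx : ∀ (ν : K), ∀ x ∈ G ν, D x ∈ ⨆ ν' ∈ {ν' : K | ν' ≠ μ}, G ν' := by
      intro ν x hx
      by_cases hν : ν = μ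
      · subst hν
        have : D x = 0 := by
          rw [hD, LinearMap.sub_apply, LinearMap.smul_apply, Module.End.one_apply, hPa ν x hx, sub_self]
        rw [this]; exact Submodule.zero_mem _
      · have hxm : D x ∈ G ν :=
          Module.End.mapsTo_maxGenEigenspace_of_comm hcd ν hx
        exact Submodule.mem_iSup_of_mem ν (Submodule.mem_iSup_of_mem hν hxm)
    have hw : MM a ∈ ⨆ ν, G ν := by
      rw [hG, Module.End.iSup_maxGenEigenspace_eq_top]; trivial
    have hDmem : D (MM a) ∈ ⨆ ν' ∈ {ν' : K | ν' ≠ μ}, G ν' := by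
      refine Submodule.iSup_induction (motive := fun x => D x ∈ ⨆ ν' ∈ {ν' : K | ν' ≠ μ}, G ν')
        G hw (fun ν x hx => hDx ν x hx) ?_ ?_
      · show D 0 ∈ _
        rw [map_zero]; exact Submodule.zero_mem _
      · intro x y hx hy
        show D (x + y) ∈ _
        rw [map_add]; exact Submodule.add_mem _ hx hy
    have hca : c • a = D (MM a) := by
      have happ := LinearMap.congr_fun h1 a
      rw [LinearMap.sub_apply, Module.End.mul_apply, Module.End.mul_apply, hPa μ a ha, map_smul] at happ
      rw [hD, LinearMap.sub_apply, LinearMap.smul_apply, Module.End.one_apply, happ, hSa μ a ha, hc]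
    have hmem1 : c • a ∈ G μ := Submodule.smul_mem _ _ ha
    have hdisj : Disjoint (G μ) (⨆ ν' ∈ {ν' : K | ν' ≠ μ}, G ν') := by
      have hind := Module.End.independent_maxGenEigenspace RR
      exact hind.disjoint_biSup (by simp)
    have hca0 : c • a = 0 := by
      exact Submodule.disjoint_def.mp hdisj (c • a) hmem1 (hca ▸ hDmem)
    rw [hSa μ a ha, ← hc]
    exact hca0
  ext v
  have hv : v ∈ ⨆ ν, G ν := by rw [hG, Module.End.iSup_maxGenEigenspace_eq_top]; trivial
  have hv0 : S v = 0 := by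
    refine Submodule.iSup_induction (motive := fun x => S x = 0) G hv (fun ν x hx => hzero ν x hx)
      (map_zero _) ?_
    intro x y hx hy
    show S (x + y) = 0
    rw [map_add, hx, hy, add_zero]
  simpa [hS] using hv0

/-- For a finite-dimensional unital (not necessarily associative) algebra `A`
over a field `F` of positive characteristic `p` and a Rota–Baxter operator `R` of weight
`lam`, there are `k, l` with `R^k ∘ (R + lam • id)^l = 0`; in particular
`Spec(R) ⊆ {0, -lam}`. -/
theorem rb_spectrum_pos_char
    {F : Type*} [Field F] (p : ℕ) [CharP F p] (hp : 0 < p)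
    {A : Type*} [NonAssocRing A] [Module F A] [SMulCommClass F A A] [IsScalarTower F A A]
    [FiniteDimensional F A]
    (lam : F) (R : A →ₗ[F] A)
    (hR : ∀ x y : A, R x * R y = R (R x * y + x * R y + lam • (x * y))) :
    (∃ k l : ℕ, R ^ k * (R + lam • LinearMap.id) ^ l = 0) ∧
      spectrum F (R : Module.End F A) ⊆ {0, -lam} := by
  classical
  haveI : NeZero p := ⟨hp.ne'⟩
  haveI hfact : Fact p.Prime := CharP.char_is_prime_of_pos F p
  by_cases hsub : Subsingleton A
  · constructor
    · exact ⟨1, 0, by ext x; exact Subsingleton.elim _ _⟩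
    · intro μ hμ
      haveI : Subsingleton (Module.End F A) :=
        ⟨fun f g => LinearMap.ext fun x => Subsingleton.elim _ _⟩
      exact absurd (isUnit_of_subsingleton _) (spectrum.mem_iff.mp hμ)
  haveI : Nontrivial A := not_subsingleton_iff_nontrivial.mp hsub
  -- Step 1: the basic operator identity coming from the Rota–Baxter relation.
  have hstep : ∀ b : A, mulRight F (R b) * R - R * mulRight F (R b)
      = R * mulRight F b * (R + lam • (1 : Module.End F A)) := by
    intro b
    ext x
    have h := hR x b
    simp only [map_add, map_smul] at h
    simp only [Module.End.mul_apply, LinearMap.sub_apply, mulRight_apply, LinearMap.add_apply, LinearMap.smul_apply,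
      Module.End.one_apply, map_add, map_smul, smul_mul_assoc]
    rw [h]
    abel
  set K := AlgebraicClosure F
  set Q : Module.End F A := R + lam • (1 : Module.End F A) with hQdef
  obtain ⟨e, he⟩ := pow_unbounded_of_one_lt (Module.finrank K (K ⊗[F] A)) hfact.out.one_lt
  set q := p ^ e with hq
  -- Step 2: iterate the identity.
  have hkey : ∀ (n : ℕ) (b : A),
      ((mulRight F (R : Module.End F A) - mulLeft F (R : Module.End F A)) ^ n) (mulRight F ((R ^ n) b))
        = ((mulLeft F (R : Module.End F A) * mulRight F Q) ^ n) (mulRight F b) := by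
    set l : Module.End (F) (Module.End F A) := mulLeft F (R : Module.End F A) with hl
    set r : Module.End (F) (Module.End F A) := mulRight F (R : Module.End F A) with hr
    set s : Module.End (F) (Module.End F A) := mulRight F Q with hs
    have hRQ : (R : Module.End F A) * Q = Q * R := by
      simp [hQdef, mul_add, add_mul, smul_mul_assoc, mul_smul_comm]
    have hcomm : Commute (r - l) (l * s) := by
      have h1 : Commute l r := (commute_mulLeft_right (R : Module.End F A) (R : Module.End F A))
      have h2 : Commute l s := (commute_mulLeft_right (R : Module.End F A) Q)
      have h3 : Commute r s := by
        ext X x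
        exact congrArg X (LinearMap.congr_fun hRQ x).symm
      exact ((h1.symm.mul_right h3).sub_left ((Commute.refl l).mul_right h2))
    intro n b
    induction n with
    | zero => simp
    | succ n ih =>
        have happ : ((R : Module.End F A) ^ (n + 1)) b = R ((R ^ n) b) := by
          rw [pow_succ']; rfl
        rw [pow_succ, Module.End.mul_apply, happ]
        have h1 : (r - l) (mulRight F (R ((R ^ n) b))) = (l * s) (mulRight F ((R ^ n) b)) := by
          simp only [LinearMap.sub_apply, hr, hl, hs, mulRight_apply, mulLeft_apply, Module.End.mul_apply]
          have := hstep ((R ^ n) b)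
          rw [← mul_assoc]
          exact this
        rw [h1]
        have h2 : ((r - l) ^ n) ((l * s) (mulRight F ((R ^ n) b)))
            = (l * s) (((r - l) ^ n) (mulRight F ((R ^ n) b))) := by
          calc ((r - l) ^ n) ((l * s) (mulRight F ((R ^ n) b)))
              = (((r - l) ^ n) * (l * s)) (mulRight F ((R ^ n) b)) := rfl
            _ = ((l * s) * ((r - l) ^ n)) (mulRight F ((R ^ n) b)) := by
                rw [(hcomm.pow_left n).eq]
            _ = _ := rfl
        rw [h2, ih, pow_succ']; rfl
  -- Step 3: collapse the binomial coefficients in characteristic p.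
  have hntE : Nontrivial (Module.End F A) := by
    obtain ⟨a, ha⟩ := exists_ne (0 : A)
    exact ⟨1, 0, fun h => ha (by simpa using LinearMap.congr_fun h a)⟩
  have hntEE : Nontrivial (Module.End (F) (Module.End F A)) := by
    obtain ⟨a, ha⟩ := exists_ne (0 : Module.End F A)
    exact ⟨1, 0, fun h => ha (by simpa using LinearMap.congr_fun h a)⟩
  haveI : CharP (Module.End (F) (Module.End F A)) p := charP_of_injective_algebraMap' F p
  set u : A := (R ^ q) (1 : A) with hu
  have hId : mulRight F u * R ^ q - R ^ q * mulRight F u = R ^ q * Q ^ q := by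
    have h := hkey q (1 : A)
    have hsubp : (mulRight F (R : Module.End F A) - mulLeft F (R : Module.End F A)) ^ q
        = (mulRight F (R : Module.End F A)) ^ q - (mulLeft F (R : Module.End F A)) ^ q :=
      sub_pow_char_pow_of_commute p e (commute_mulLeft_right (R : Module.End F A) (R : Module.End F A)).symm
    have hmulp : (mulLeft F (R : Module.End F A) * mulRight F Q) ^ q
        = (mulLeft F (R : Module.End F A)) ^ q * (mulRight F Q) ^ q :=
      (commute_mulLeft_right (R : Module.End F A) Q).mul_pow _
    rw [hsubp, hmulp, pow_mulLeft, pow_mulRight, pow_mulRight] at h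
    have hone : mulRight F (1 : A) = (1 : Module.End F A) := by
      ext x; simp [mulRight_apply]
    rw [hone] at h
    simpa only [LinearMap.sub_apply, mulRight_apply, mulLeft_apply, Module.End.mul_apply,
      ← Module.End.one_eq_id, one_mul, mul_one] using h
  -- Step 4: base change to the algebraic closure and kill the operator there.
  haveI : Nontrivial (K ⊗[F] A) := by
    have h1 : 0 < Module.finrank K (K ⊗[F] A) := by
      rw [Module.finrank_baseChange]
      exact Module.finrank_pos
    exact Module.nontrivial_of_finrank_pos h1
  have hQQ : (Q : Module.End F A).baseChange K
      = (R : Module.End F A).baseChange K + (algebraMap F K lam) • 1 := by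
    rw [hQdef, baseChange_add, baseChange_smul, baseChange_one, algebraMap_smul]
  have h1 : ((mulRight F u : Module.End F A).baseChange K) * ((R : Module.End F A).baseChange K) ^ q
      - ((R : Module.End F A).baseChange K) ^ q * ((mulRight F u : Module.End F A).baseChange K)
      = ((R : Module.End F A).baseChange K) ^ q
        * ((R : Module.End F A).baseChange K + (algebraMap F K lam) • 1) ^ q := by
    have hc := congrArg (fun f : Module.End F A => f.baseChange K) hId
    simp only [baseChange_sub, baseChange_mul, baseChange_pow] at hc
    rw [hQQ] at hc
    exact hc
  have hclosed : ((R : Module.End F A).baseChange K) ^ q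
      * ((R : Module.End F A).baseChange K + (algebraMap F K lam) • 1) ^ q = 0 :=
    rb_aux_closed p (algebraMap F K lam) ((R : Module.End F A).baseChange K)
      ((mulRight F u : Module.End F A).baseChange K) e he h1
  -- Step 5: descend to F.
  have hSF : (R : Module.End F A) ^ q * Q ^ q = 0 := by
    have hbc : ((R : Module.End F A) ^ q * Q ^ q).baseChange K = 0 := by
      rw [baseChange_mul, baseChange_pow, baseChange_pow, hQQ]
      exact hclosed
    rw [Module.FaithfullyFlat.zero_iff_lTensor_zero F K]
    apply TensorProduct.ext'
    intro c x
    have := LinearMap.congr_fun hbc (c ⊗ₜ x)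
    simpa [LinearMap.baseChange_tmul, LinearMap.lTensor_tmul] using this
  have hQid : Q = R + lam • LinearMap.id := by rw [hQdef, Module.End.one_eq_id]
  constructor
  · exact ⟨q, q, by rw [← hQid]; exact hSF⟩
  -- Step 6: the spectrum is contained in {0, -lam}.
  · intro μ hμ
    have hev := Module.End.hasEigenvalue_iff_mem_spectrum.mpr hμ
    obtain ⟨v, hv⟩ := hev.exists_hasEigenvector
    have hv1 : R v = μ • v := hv.apply_eq_smul
    have hvQ : Q v = (μ + lam) • v := by
      rw [hQdef, LinearMap.add_apply, LinearMap.smul_apply, Module.End.one_apply, hv1, ← add_smul]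
    have hQq : (Q ^ q) v = (μ + lam) ^ q • v := rb_aux_eigen_pow Q v (μ + lam) hvQ q
    have hRq : ∀ w : A, ∀ c : F, R w = c • w → (R ^ q) w = c ^ q • w :=
      fun w c hc => rb_aux_eigen_pow (R : Module.End F A) w c hc q
    have h0 : ((μ + lam) ^ q * μ ^ q) • v = 0 := by
      have := LinearMap.congr_fun hSF v
      rw [Module.End.mul_apply, hQq, map_smul, rb_aux_eigen_pow (R : Module.End F A) v μ hv1 q,
        smul_smul] at this
      simpa using this
    have hscal : (μ + lam) ^ q * μ ^ q = 0 := by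
      by_contra hne
      exact hv.right (by simpa [hne] using smul_eq_zero.mp h0)
    have hq0 : q ≠ 0 := pow_ne_zero e hp.ne'
    rcases mul_eq_zero.mp hscal with hcase | hcase
    · right
      have : μ + lam = 0 := pow_eq_zero_iff hq0 |>.mp hcase
      have : μ = -lam := eq_neg_of_add_eq_zero_left this
      simpa [Set.mem_singleton_iff] using this
    · left
      exact pow_eq_zero_iff hq0 |>.mp hcase
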